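/- Let P ∈ M_{p×m}(ℤ_{≥0}) with p, m > 0, and let B₁ be an n×n skew-symmetrizable integer matrix. If B₂ ∈ M_{m×n}(ℤ) is uniformly column sign-coherent with respect to B₁, then PB₂ is uniformly column sign-coherent with respect to B₁. -/

import Mathlib

/-- Mutation in direction `k` of an `(n+m) × n` integer matrix, rows indexed by
`Fin n ⊕ Fin m` (the principal part is the `Sum.inl` block). -/
def mutate {n m : ℕ} (k : Fin n) (B : Matrix (Fin n ⊕ Fin m) (Fin n) ℤ) :
    Matrix (Fin n ⊕ Fin m) (Fin n) ℤ :=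
  fun i j =>
    if i = Sum.inl k ∨ j = k then -B i j
    else B i j + Int.sign (B i k) * max (B i k * B (Sum.inl k) j) 0

/-- Apply a sequence of mutations `μ_{k_s} ⋯ μ_{k_1}` (the list is `[k_1, …, k_s]`). -/
def mutateSeq {n m : ℕ} (L : List (Fin n)) (B : Matrix (Fin n ⊕ Fin m) (Fin n) ℤ) :
    Matrix (Fin n ⊕ Fin m) (Fin n) ℤ :=
  L.foldl (fun M k => mutate k M) B

/-- Column sign-coherence. -/
def ColSgnCoh {m n : ℕ} (A : Matrix (Fin m) (Fin n) ℤ) : Prop :=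
  ∀ (i i' : Fin m) (j : Fin n), 0 ≤ A i j * A i' j

/-- `B₂` is uniformly column sign-coherent with respect to `B₁` if the lower part of
any iterated mutation of the stacked matrix `[B₁; B₂]` is column sign-coherent. -/
def UColSgnCoh {n m : ℕ} (B₁ : Matrix (Fin n) (Fin n) ℤ)
    (B₂ : Matrix (Fin m) (Fin n) ℤ) : Prop :=
  ∀ L : List (Fin n),
    ColSgnCoh (fun (i : Fin m) (j : Fin n) =>
      mutateSeq L (Matrix.fromRows B₁ B₂) (Sum.inr i) j)

lemma mutateSeq_concat {n m : ℕ} (L : List (Fin n)) (k : Fin n)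
    (B : Matrix (Fin n ⊕ Fin m) (Fin n) ℤ) :
    mutateSeq (L ++ [k]) B = mutate k (mutateSeq L B) := by
  simp [mutateSeq, List.foldl_append]

lemma sgn_mul_max_of_nonneg (x y : ℤ) (hx : 0 ≤ x) :
    Int.sign x * max (x * y) 0 = x * max y 0 := by
  rcases hx.eq_or_lt with h | h
  · simp [← h]
  · rw [Int.sign_eq_one_of_pos h, one_mul]
    rcases le_total y 0 with hy | hy
    · rw [max_eq_right (mul_nonpos_of_nonneg_of_nonpos h.le hy), max_eq_right hy, mul_zero]
    · rw [max_eq_left (mul_nonneg h.le hy), max_eq_left hy]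

lemma sgn_mul_max_of_nonpos (x y : ℤ) (hx : x ≤ 0) :
    Int.sign x * max (x * y) 0 = x * max (-y) 0 := by
  rcases hx.eq_or_lt with h | h
  · simp [h]
  · rw [Int.sign_eq_neg_one_of_neg h, neg_one_mul]
    rcases le_total y 0 with hy | hy
    · rw [max_eq_left (by nlinarith : (0:ℤ) ≤ x * y),
        max_eq_left (neg_nonneg.mpr hy), mul_neg]
    · rw [max_eq_right (mul_nonpos_of_nonpos_of_nonneg h.le hy),
        max_eq_right (neg_nonpos.mpr hy), mul_zero, neg_zero]

/-- Column dichotomy from sign-coherence. -/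
lemma col_dichotomy {m n : ℕ} {A : Matrix (Fin m) (Fin n) ℤ} (h : ColSgnCoh A) (j : Fin n) :
    (∀ i, 0 ≤ A i j) ∨ (∀ i, A i j ≤ 0) := by
  by_cases hall : ∀ i, 0 ≤ A i j
  · exact Or.inl hall
  · right
    push_neg at hall
    obtain ⟨i0, hi0⟩ := hall
    intro i
    nlinarith [h i i0 j]

lemma key {p m n : ℕ} (P : Matrix (Fin p) (Fin m) ℤ) (hP : ∀ i j, 0 ≤ P i j)
    (B₁ : Matrix (Fin n) (Fin n) ℤ) (B₂ : Matrix (Fin m) (Fin n) ℤ)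
    (hB₂ : UColSgnCoh B₁ B₂) (L : List (Fin n)) :
    (∀ a j, mutateSeq L (Matrix.fromRows B₁ (P * B₂)) (Sum.inl a) j
        = mutateSeq L (Matrix.fromRows B₁ B₂) (Sum.inl a) j) ∧
    (∀ a j, mutateSeq L (Matrix.fromRows B₁ (P * B₂)) (Sum.inr a) j
        = ∑ l, P a l * mutateSeq L (Matrix.fromRows B₁ B₂) (Sum.inr l) j) := by
  induction L using List.reverseRecOn with
  | nil =>
    constructor
    · intro a j; simp [mutateSeq]
    · intro a j; simp [mutateSeq, Matrix.fromRows_apply_inr, Matrix.mul_apply]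
  | append_singleton L k ih =>
    obtain ⟨ihT, ihB⟩ := ih
    set M := mutateSeq L (Matrix.fromRows B₁ B₂) with hM
    set N := mutateSeq L (Matrix.fromRows B₁ (P * B₂)) with hN
    rw [mutateSeq_concat, mutateSeq_concat, ← hM, ← hN]
    constructor
    · intro a j
      simp only [mutate]
      by_cases hc : a = k ∨ j = k
      · have hc1 : (Sum.inl a : Fin n ⊕ Fin p) = Sum.inl k ∨ j = k := by
          rcases hc with hc | hc
          · exact Or.inl (by rw [hc])
          · exact Or.inr hc
        have hc2 : (Sum.inl a : Fin n ⊕ Fin m) = Sum.inl k ∨ j = k := by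
          rcases hc with hc | hc
          · exact Or.inl (by rw [hc])
          · exact Or.inr hc
        rw [if_pos hc1, if_pos hc2, ihT]
      · have hc1 : ¬((Sum.inl a : Fin n ⊕ Fin p) = Sum.inl k ∨ j = k) := by
          simpa using hc
        have hc2 : ¬((Sum.inl a : Fin n ⊕ Fin m) = Sum.inl k ∨ j = k) := by
          simpa using hc
        rw [if_neg hc1, if_neg hc2, ihT, ihT, ihT]
    · intro a j
      have hsign : (∀ l, 0 ≤ M (Sum.inr l) k) ∨ (∀ l, M (Sum.inr l) k ≤ 0) :=
        col_dichotomy (hB₂ L) k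
      simp only [mutate]
      by_cases hjk : j = k
      · have hc1 : (Sum.inr a : Fin n ⊕ Fin p) = Sum.inl k ∨ j = k := Or.inr hjk
        rw [if_pos hc1, ihB]
        rw [← Finset.sum_neg_distrib]
        refine Finset.sum_congr rfl fun l _ => ?_
        rw [if_pos (Or.inr hjk : (Sum.inr l : Fin n ⊕ Fin m) = Sum.inl k ∨ j = k), mul_neg]
      · have hc1 : ¬((Sum.inr a : Fin n ⊕ Fin p) = Sum.inl k ∨ j = k) := by
          simpa using hjk
        have hc' : ∀ l : Fin m, ¬((Sum.inr l : Fin n ⊕ Fin m) = Sum.inl k ∨ j = k) := by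
          intro l; simpa using hjk
        rw [if_neg hc1]
        have hNa : N (Sum.inr a) k = ∑ l, P a l * M (Sum.inr l) k := ihB a k
        have hNj : N (Sum.inr a) j = ∑ l, P a l * M (Sum.inr l) j := ihB a j
        have hNk : N (Sum.inl k) j = M (Sum.inl k) j := ihT k j
        rcases hsign with hpos | hneg
        · have hNak : 0 ≤ N (Sum.inr a) k := by
            rw [hNa]
            exact Finset.sum_nonneg fun l _ => mul_nonneg (hP a l) (hpos l)
          rw [sgn_mul_max_of_nonneg _ _ hNak, hNa, hNj, hNk, Finset.sum_mul, ← Finset.sum_add_distrib]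
          refine Finset.sum_congr rfl fun l _ => ?_
          rw [if_neg (hc' l), sgn_mul_max_of_nonneg _ _ (hpos l)]
          ring
        · have hNak : N (Sum.inr a) k ≤ 0 := by
            rw [hNa]
            exact Finset.sum_nonpos fun l _ =>
              mul_nonpos_of_nonneg_of_nonpos (hP a l) (hneg l)
          rw [sgn_mul_max_of_nonpos _ _ hNak, hNa, hNj, hNk, Finset.sum_mul, ← Finset.sum_add_distrib]
          refine Finset.sum_congr rfl fun l _ => ?_
          rw [if_neg (hc' l), sgn_mul_max_of_nonpos _ _ (hneg l)]
          ring

theorem uniform_colSgnCoh_mul {p m n : ℕ} (hp : 0 < p) (hm : 0 < m)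
    (P : Matrix (Fin p) (Fin m) ℤ) (hP : ∀ i j, 0 ≤ P i j)
    (B₁ : Matrix (Fin n) (Fin n) ℤ)
    (S : Fin n → ℤ) (hS : ∀ i, 0 < S i)
    (hskew : ∀ i j, S i * B₁ i j = -(S j * B₁ j i))
    (B₂ : Matrix (Fin m) (Fin n) ℤ)
    (hB₂ : UColSgnCoh B₁ B₂) :
    UColSgnCoh B₁ (P * B₂) := by
  intro L i i' j
  obtain ⟨-, hlow⟩ := key P hP B₁ B₂ hB₂ L
  simp only [hlow]
  rcases col_dichotomy (hB₂ L) j with hpos | hneg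
  · exact mul_nonneg
      (Finset.sum_nonneg fun l _ => mul_nonneg (hP i l) (hpos l))
      (Finset.sum_nonneg fun l _ => mul_nonneg (hP i' l) (hpos l))
  · have h1 := Finset.sum_nonpos fun l (_ : l ∈ Finset.univ) =>
      mul_nonpos_of_nonneg_of_nonpos (hP i l) (hneg l)
    have h2 := Finset.sum_nonpos fun l (_ : l ∈ Finset.univ) =>
      mul_nonpos_of_nonneg_of_nonpos (hP i' l) (hneg l)
    have := mul_nonneg (neg_nonneg.mpr h1) (neg_nonneg.mpr h2)
    rwa [neg_mul_neg] at this
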